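/- The function u⁺ is positive and strictly decreasing on ℝ, and it solves the pair-(s,m) equation with parameters a = 1/β + 2/κ and b = −1; that is, for all x ∈ ℝ, u⁺(x) = (1/β + 2/κ) − s(x) + 2α ∫_0^x (s(x)−s(y)) u⁺(y) dy. -/

import Mathlib

open MeasureTheory Real

/-- The discontinuous scale function of the snapping out Brownian motion:
`s(x) = x` for `x < 0` and `s(x) = x + 2/κ` for `x ≥ 0`. -/
noncomputable def sfun (κ : ℝ) (x : ℝ) : ℝ := if x < 0 then x else x + 2 / κ

/-- `u⁺(x) = e^{−βx}/β + (e^{βx} + e^{−βx})/κ` for `x < 0`, and `u⁺(x) = e^{−βx}/β`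
for `x ≥ 0`, where `β = √(2α)`. -/
noncomputable def upfun (α κ : ℝ) (x : ℝ) : ℝ :=
  if x < 0 then
    Real.exp (-(Real.sqrt (2 * α)) * x) / Real.sqrt (2 * α) +
      (Real.exp (Real.sqrt (2 * α) * x) + Real.exp (-(Real.sqrt (2 * α)) * x)) / κ
  else Real.exp (-(Real.sqrt (2 * α)) * x) / Real.sqrt (2 * α)

lemma key (c x : ℝ) (hc : c ≠ 0) :
    ∫ y in (0:ℝ)..x, (x - y) * Real.exp (c * y)
      = (Real.exp (c * x) - 1 - c * x) / c ^ 2 := by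
  have hder : ∀ y ∈ Set.uIcc (0:ℝ) x,
      HasDerivAt (fun y => Real.exp (c * y) * ((x - y) / c + 1 / c ^ 2))
        ((x - y) * Real.exp (c * y)) y := by
    intro y _
    have h1 : HasDerivAt (fun y => Real.exp (c * y)) (c * Real.exp (c * y)) y := by
      simpa [mul_comm] using ((hasDerivAt_id y).const_mul c).exp
    have h2 : HasDerivAt (fun y : ℝ => (x - y) / c + 1 / c ^ 2) (-(1 / c)) y := by
      have h := (((hasDerivAt_id y).const_sub x).div_const c).add_const (1 / c ^ 2)
      refine h.congr_deriv ?_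
      simp [neg_div]
    have := h1.mul h2
    refine this.congr_deriv ?_
    field_simp
    ring
  have hcont : IntervalIntegrable (fun y => (x - y) * Real.exp (c * y)) volume 0 x := by
    exact ((continuous_const.sub continuous_id).mul
      (Real.continuous_exp.comp (continuous_const.mul continuous_id))).intervalIntegrable _ _
  rw [intervalIntegral.integral_eq_sub_of_hasDerivAt hder hcont]
  field_simp
  simp
  ring

theorem stmt17 (α κ : ℝ) (hα : 0 < α) (hκ : 0 < κ) :
    (∀ x : ℝ, 0 < upfun α κ x) ∧
    StrictAnti (upfun α κ) ∧
    (∀ x : ℝ, upfun α κ x =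
      (1 / Real.sqrt (2 * α) + 2 / κ) - sfun κ x +
        2 * α * ∫ y in (0 : ℝ)..x, (sfun κ x - sfun κ y) * upfun α κ y) := by
  set β := Real.sqrt (2 * α) with hβ
  have hβ0 : 0 < β := Real.sqrt_pos.mpr (by linarith)
  have hβ2 : β ^ 2 = 2 * α := Real.sq_sqrt (by linarith)
  have hβne : β ≠ 0 := ne_of_gt hβ0
  refine ⟨?_, ?_, ?_⟩
  · intro x
    unfold upfun
    split <;> positivity
  · intro x y hxy
    unfold upfun
    rcases lt_or_ge y 0 with hy | hy
    · have hx : x < 0 := hxy.trans hy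
      rw [if_pos hx, if_pos hy]
      have h1 : Real.exp (-β * y) < Real.exp (-β * x) := by
        apply Real.exp_lt_exp.mpr; nlinarith
      have h2 : Real.exp (β * y) + Real.exp (-β * y)
          < Real.exp (β * x) + Real.exp (-β * x) := by
        have habs : |β * y| < |β * x| := by
          rw [abs_of_neg (by nlinarith), abs_of_neg (by nlinarith)]; nlinarith
        have := Real.cosh_lt_cosh.mpr habs
        rw [Real.cosh_eq, Real.cosh_eq] at this
        rw [neg_mul, neg_mul]
        linarith
      gcongr
    · rcases lt_or_ge x 0 with hx | hx
      · rw [if_pos hx, if_neg (not_lt.mpr hy)]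
        have h1 : Real.exp (-β * y) ≤ 1 := by
          apply Real.exp_le_one_iff.mpr; nlinarith
        have h2 : (1:ℝ) < Real.exp (-β * x) := by
          apply Real.one_lt_exp_iff.mpr; nlinarith
        have h3 : Real.exp (-β * y) / β ≤ 1 / β := by gcongr
        have h4 : 1 / β < Real.exp (-β * x) / β := by gcongr
        have h5 : 0 < (Real.exp (β * x) + Real.exp (-β * x)) / κ := by positivity
        linarith
      · rw [if_neg (not_lt.mpr hx), if_neg (not_lt.mpr hy)]
        have h1 : Real.exp (-β * y) < Real.exp (-β * x) := by
          apply Real.exp_lt_exp.mpr; nlinarith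
        gcongr
  · intro x
    rcases lt_or_ge x 0 with hx | hx
    · -- x < 0
      have hcont1 : IntervalIntegrable
          (fun y => (x - y) * Real.exp (-β * y) * (β⁻¹ + κ⁻¹)) volume 0 x :=
        (((continuous_const.sub continuous_id).mul
          (Real.continuous_exp.comp (continuous_const.mul continuous_id))).mul
          continuous_const).intervalIntegrable _ _
      have hcont2 : IntervalIntegrable
          (fun y => (x - y) * Real.exp (β * y) * κ⁻¹) volume 0 x :=
        (((continuous_const.sub continuous_id).mul
          (Real.continuous_exp.comp (continuous_const.mul continuous_id))).mul
          continuous_const).intervalIntegrable _ _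
      have heq : (∫ y in (0:ℝ)..x, (sfun κ x - sfun κ y) * upfun α κ y)
          = ∫ y in (0:ℝ)..x, ((x - y) * Real.exp (-β * y) * (β⁻¹ + κ⁻¹)
              + (x - y) * Real.exp (β * y) * κ⁻¹) := by
        apply intervalIntegral.integral_congr_ae
        have h0 : ∀ᵐ y : ℝ, y ≠ (0:ℝ) := by
          refine ae_iff.mpr ?_
          simpa only [ne_eq, not_not, Set.setOf_eq_eq_singleton] using measure_singleton (0:ℝ)
        filter_upwards [h0] with y hy0 hymem
        have hmem' : y ∈ Set.Ioc x 0 := by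
          rwa [Set.uIoc_comm, Set.uIoc_of_le hx.le] at hymem
        have hy : y < 0 := lt_of_le_of_ne hmem'.2 hy0
        simp only [sfun, upfun, if_pos hy, if_pos hx, ← hβ]
        field_simp
        ring
      rw [heq, intervalIntegral.integral_add hcont1 hcont2,
        intervalIntegral.integral_mul_const, intervalIntegral.integral_mul_const,
        key (-β) x (by simp [hβne]), key β x hβne]
      simp only [upfun, sfun, if_pos hx, ← hβ, neg_sq]
      rw [← hβ2]
      field_simp
      ring
    · -- 0 ≤ x
      have heq : (∫ y in (0:ℝ)..x, (sfun κ x - sfun κ y) * upfun α κ y)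
          = ∫ y in (0:ℝ)..x, ((x - y) * Real.exp (-β * y) * β⁻¹) := by
        apply intervalIntegral.integral_congr
        intro y hy
        have hy0 : 0 ≤ y := (Set.uIcc_of_le hx ▸ hy).1
        simp only [sfun, upfun, if_neg (not_lt.mpr hy0), if_neg (not_lt.mpr hx), ← hβ]
        field_simp
        ring
      rw [heq, intervalIntegral.integral_mul_const, key (-β) x (by simp [hβne])]
      simp only [upfun, sfun, if_neg (not_lt.mpr hx), ← hβ, neg_sq]
      rw [← hβ2]
      field_simp
      ring
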